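/- Let D be a diagonal m×m idempotent of rank r and E = [[1_k, 0],[0, D]]. Then the group E·G·E (with identity E) is isomorphic as a group to the group of block matrices [[1_k, B'],[0, T']] with B' ∈ Mat_{k,r}(ℂ) and T' an invertible diagonal r×r matrix. -/
import Mathlib


/-- For a diagonal idempotent `D = diagonal d` of rank `r` and
`E = [[1, 0],[0, D]]`, the group `E G E` (inside the block monoid, with identity `E`)
is isomorphic, via a multiplicative bijection, to the group of block matrices
`[[1, B'],[0, T']]` with `B' ∈ Mat_{k,r}(ℂ)` and `T'` an invertible diagonal `r × r`
matrix. -/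
theorem stmt13 (k m r : ℕ) (d : Fin m → ℂ) (hd : ∀ i, d i = 0 ∨ d i = 1)
    (hr : Set.ncard {i | d i = 1} = r) :
    ∃ φ : Matrix (Fin k ⊕ Fin m) (Fin k ⊕ Fin m) ℂ →
        Matrix (Fin k ⊕ Fin r) (Fin k ⊕ Fin r) ℂ,
      Set.BijOn φ
        {X | ∃ (B : Matrix (Fin k) (Fin m) ℂ) (t : Fin m → ℂ),
          B * Matrix.diagonal d = B ∧ (∀ i, d i = 1 → t i ≠ 0) ∧ (∀ i, d i = 0 → t i = 0) ∧
          X = Matrix.fromBlocks 1 B 0 (Matrix.diagonal t)}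
        {Y | ∃ (B' : Matrix (Fin k) (Fin r) ℂ) (t' : Fin r → ℂ), (∀ i, t' i ≠ 0) ∧
          Y = Matrix.fromBlocks 1 B' 0 (Matrix.diagonal t')} ∧
      ∀ X ∈ {X | ∃ (B : Matrix (Fin k) (Fin m) ℂ) (t : Fin m → ℂ),
          B * Matrix.diagonal d = B ∧ (∀ i, d i = 1 → t i ≠ 0) ∧ (∀ i, d i = 0 → t i = 0) ∧
          X = Matrix.fromBlocks 1 B 0 (Matrix.diagonal t)},
        ∀ Y ∈ {X | ∃ (B : Matrix (Fin k) (Fin m) ℂ) (t : Fin m → ℂ),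
          B * Matrix.diagonal d = B ∧ (∀ i, d i = 1 → t i ≠ 0) ∧ (∀ i, d i = 0 → t i = 0) ∧
          X = Matrix.fromBlocks 1 B 0 (Matrix.diagonal t)},
        φ (X * Y) = φ X * φ Y := by
  classical
  have hcard : Fintype.card {i // d i = 1} = r := by
    rwa [Set.ncard_eq_toFinset_card', Set.toFinset_card] at hr
  let ε : {i // d i = 1} ≃ Fin r := Fintype.equivFinOfCardEq hcard
  let e : Fin r → Fin m := fun j => (ε.symm j).val
  have hde : ∀ j, d (e j) = 1 := fun j => (ε.symm j).2
  have he_inj : Function.Injective e := fun a b h => by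
    have : ε.symm a = ε.symm b := Subtype.ext h
    exact ε.symm.injective this
  have heε : ∀ i (h : d i = 1), e (ε ⟨i, h⟩) = i := fun i h => by
    simp [e]
  have hεe : ∀ j, ε ⟨e j, hde j⟩ = j := fun j => by
    have : (⟨e j, hde j⟩ : {i // d i = 1}) = ε.symm j := rfl
    rw [this, Equiv.apply_symm_apply]
  let mp : Fin k ⊕ Fin r → Fin k ⊕ Fin m := Sum.map id e
  -- sum reindexing lemma
  have hsum : ∀ g : Fin m → ℂ, (∀ b, d b ≠ 1 → g b = 0) →
      ∑ b, g b = ∑ j, g (e j) := by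
    intro g hg
    have h1 : ∑ b, g b = ∑ b ∈ Finset.univ.filter (fun b => d b = 1), g b := by
      symm
      apply Finset.sum_filter_of_ne
      intro x _ hx
      by_contra h
      exact hx (hg x h)
    have h2 : ∑ b ∈ Finset.univ.filter (fun b => d b = 1), g b
        = ∑ s : {i // d i = 1}, g s.val := by
      apply Finset.sum_subtype
      intro x; simp
    have h3 : ∑ j, g (e j) = ∑ s : {i // d i = 1}, g s.val :=
      Equiv.sum_comp ε.symm (fun s => g s.val)
    rw [h1, h2, ← h3]
  refine ⟨fun X => X.submatrix mp mp, ⟨?_, ?_, ?_⟩, ?_⟩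
  · -- MapsTo
    rintro X ⟨B, t, hB, ht1, ht0, rfl⟩
    refine ⟨B.submatrix id e, fun j => t (e j), fun j => ht1 _ (hde j), ?_⟩
    ext (p | p) (q | q) <;>
      simp [mp, Matrix.submatrix_apply, Matrix.diagonal_apply, he_inj.eq_iff]
  · -- InjOn
    rintro X ⟨B, t, hB, ht1, ht0, rfl⟩ Y ⟨C, s, hC, hs1, hs0, rfl⟩ hXY
    have hB0 : ∀ p i, d i = 0 → B p i = 0 := fun p i h => by
      have := congrFun (congrFun hB p) i
      simpa [Matrix.mul_diagonal, h] using this.symm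
    have hC0 : ∀ p i, d i = 0 → C p i = 0 := fun p i h => by
      have := congrFun (congrFun hC p) i
      simpa [Matrix.mul_diagonal, h] using this.symm
    have hBC : B = C := by
      ext p i
      rcases hd i with h | h
      · rw [hB0 p i h, hC0 p i h]
      · have := congrFun (congrFun hXY (Sum.inl p)) (Sum.inr (ε ⟨i, h⟩))
        simpa [mp, Matrix.submatrix_apply, heε i h] using this
    have hts : t = s := funext fun i => by
      rcases hd i with h | h
      · rw [ht0 i h, hs0 i h]
      · have := congrFun (congrFun hXY (Sum.inr (ε ⟨i, h⟩))) (Sum.inr (ε ⟨i, h⟩))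
        simpa [mp, Matrix.submatrix_apply, heε i h, Matrix.diagonal_apply] using this
    rw [hBC, hts]
  · -- SurjOn
    rintro Y ⟨B', t', ht', rfl⟩
    refine ⟨Matrix.fromBlocks 1
        (Matrix.of fun p i => if h : d i = 1 then B' p (ε ⟨i, h⟩) else 0) 0
        (Matrix.diagonal fun i => if h : d i = 1 then t' (ε ⟨i, h⟩) else 0),
      ⟨_, _, ?_, ?_, ?_, rfl⟩, ?_⟩
    · ext p i
      rcases hd i with h | h
      · simp [Matrix.mul_diagonal, h]
      · simp [Matrix.mul_diagonal, h]
    · intro i h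
      simp only [h, dif_pos]
      exact ht' _
    · intro i h
      have : ¬ d i = 1 := by rw [h]; norm_num
      simp [this]
    · ext (p | p) (q | q) <;>
        simp [mp, Matrix.submatrix_apply, Matrix.diagonal_apply, he_inj.eq_iff, hde, hεe]
  · -- multiplicative
    rintro X ⟨B, t, hB, ht1, ht0, rfl⟩ Y ⟨C, s, hC, hs1, hs0, rfl⟩
    have hB0 : ∀ p i, d i = 0 → B p i = 0 := fun p i h => by
      have := congrFun (congrFun hB p) i
      simpa [Matrix.mul_diagonal, h] using this.symm
    ext p q
    simp only [Matrix.submatrix_apply, Matrix.mul_apply]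
    rw [Fintype.sum_sum_type, Fintype.sum_sum_type]
    congr 1
    apply hsum
    intro b hb
    rcases hd b with h | h
    · have hX0 : Matrix.fromBlocks (1 : Matrix (Fin k) (Fin k) ℂ) B 0 (Matrix.diagonal t) (mp p) (Sum.inr b) = 0 := by
        rcases p with p | p
        · simpa [mp] using hB0 p b h
        · simp [mp, Matrix.diagonal_apply]
          intro heq
          rw [heq]
          exact ht0 b h
      rw [hX0, zero_mul]
    · exact absurd h hb
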